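/- Let F = Ψ + Φ where Ψ, Φ are proper lsc convex functions on a Hilbert space such that F has a minimizer. Let γ > 0 and μ_t ∈ (0,2) with Σ_t μ_t(2−μ_t) = +∞. Then the Douglas–Rachford iteration x^{t+1} = (1 − μ_t/2) x^t + (μ_t/2)(2·prox_{γΨ} − Id)∘(2·prox_{γΦ} − Id)(x^t) converges weakly to some point x̂, and prox_{γΦ}(x̂) is a minimizer of F. -/

import Mathlib

set_option maxHeartbeats 2000000

open scoped RealInnerProductSpace
open Filter Topology


private lemma drA_sq_le {a b : ℝ} (ha : 0 ≤ a) (hb : 0 ≤ b) (h : a^2 ≤ b^2) : a ≤ b := by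
  nlinarith

/-- limit along ultrafilter of bounded real sequence -/
private lemma drA_ultra_lim (u : ℕ → ℝ) (M : ℝ) (hu : ∀ n, |u n| ≤ M)
    (U : Ultrafilter ℕ) : ∃ c, Tendsto u U (𝓝 c) := by
  have hmem : ∀ n, u n ∈ Set.Icc (-M) M := fun n => abs_le.mp (hu n)
  obtain ⟨c, -, hc⟩ := (isCompact_Icc (a := -M) (b := M)).ultrafilter_le_nhds (U.map u)
    (le_principal_iff.mpr (Filter.mem_map.mpr (Filter.univ_mem' hmem)))
  exact ⟨c, hc⟩

/-- weak limit along an ultrafilter of a bounded sequence in Hilbert space -/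
private lemma drA_weak_lim {H : Type*} [NormedAddCommGroup H] [InnerProductSpace ℝ H]
    [CompleteSpace H] (x : ℕ → H) (M : ℝ) (hx : ∀ t, ‖x t‖ ≤ M) (U : Ultrafilter ℕ) :
    ∃ w : H, ∀ v, Tendsto (fun t => (⟪x t, v⟫ : ℝ)) U (𝓝 ⟪w, v⟫) := by
  have hb : ∀ v : H, ∀ n, |(⟪x n, v⟫ : ℝ)| ≤ M * ‖v‖ := fun v n =>
    (abs_real_inner_le_norm _ _).trans (mul_le_mul_of_nonneg_right (hx n) (norm_nonneg v))
  have h : ∀ v : H, ∃ c, Tendsto (fun t => (⟪x t, v⟫ : ℝ)) U (𝓝 c) := fun v =>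
    drA_ultra_lim _ (M * ‖v‖) (hb v) U
  choose c hc using h
  have hadd : ∀ v v', c (v + v') = c v + c v' := by
    intro v v'
    refine tendsto_nhds_unique (hc (v + v')) ?_
    have : (fun t => (⟪x t, v + v'⟫ : ℝ)) = fun t => (⟪x t, v⟫ : ℝ) + ⟪x t, v'⟫ := by
      funext t; exact inner_add_right _ _ _
    rw [this]; exact (hc v).add (hc v')
  have hsmul : ∀ (r : ℝ) v, c (r • v) = r * c v := by
    intro r v
    refine tendsto_nhds_unique (hc (r • v)) ?_
    have : (fun t => (⟪x t, r • v⟫ : ℝ)) = fun t => r * ⟪x t, v⟫ := by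
      funext t; exact real_inner_smul_right _ _ _
    rw [this]; exact (hc v).const_mul r
  have hbound : ∀ v, ‖c v‖ ≤ M * ‖v‖ := by
    intro v
    rw [Real.norm_eq_abs]
    have h1 : Tendsto (fun t => |(⟪x t, v⟫ : ℝ)|) U (𝓝 |c v|) := (hc v).abs
    exact le_of_tendsto h1 (Filter.Eventually.of_forall (hb v))
  let f : H →ₗ[ℝ] ℝ :=
    { toFun := c, map_add' := hadd, map_smul' := hsmul }
  let f' : H →L[ℝ] ℝ := f.mkContinuous M hbound
  refine ⟨(InnerProductSpace.toDual ℝ H).symm f', fun v => ?_⟩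
  rw [InnerProductSpace.toDual_symm_apply]
  exact hc v

/-- reflection inequality -/
private lemma drA_refl {H : Type*} [NormedAddCommGroup H] [InnerProductSpace ℝ H]
    (u d : H) (h : (⟪d, d - u⟫ : ℝ) ≤ 0) : ‖u - (2:ℝ) • d‖ ≤ ‖u‖ := by
  refine drA_sq_le (norm_nonneg _) (norm_nonneg _) ?_
  have e1 : ‖u - (2:ℝ) • d‖^2 = ‖u‖^2 - 2*⟪u, (2:ℝ)•d⟫ + ‖(2:ℝ)•d‖^2 := norm_sub_sq_real _ _
  have e2 : (⟪u, (2:ℝ)•d⟫ : ℝ) = 2 * ⟪u,d⟫ := real_inner_smul_right _ _ _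
  have e3 : ‖(2:ℝ)•d‖^2 = 4*‖d‖^2 := by
    rw [norm_smul]; simp [Real.norm_eq_abs]; ring
  have e4 : (⟪d, d - u⟫ : ℝ) = ‖d‖^2 - ⟪d, u⟫ := by
    rw [inner_sub_right, real_inner_self_eq_norm_sq]
  have e5 : (⟪d, u⟫ : ℝ) = ⟪u, d⟫ := real_inner_comm _ _
  nlinarith

/-- KM identity -/
private lemma drA_km {H : Type*} [NormedAddCommGroup H] [InnerProductSpace ℝ H]
    (a b : H) (l : ℝ) :
    ‖(1-l) • a + l • b‖^2 = (1-l)*‖a‖^2 + l*‖b‖^2 - l*(1-l)*‖a-b‖^2 := by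
  have e1 : ‖(1-l) • a + l • b‖^2
      = ‖(1-l)•a‖^2 + 2*⟪(1-l)•a, l•b⟫ + ‖l•b‖^2 := norm_add_sq_real _ _
  have e2 : (⟪(1-l)•a, l•b⟫ : ℝ) = (1-l)*l*⟪a,b⟫ := by
    rw [real_inner_smul_left, real_inner_smul_right]; ring
  have e3 : ‖(1-l)•a‖^2 = (1-l)^2*‖a‖^2 := by rw [norm_smul]; simp [Real.norm_eq_abs, mul_pow, sq_abs]
  have e4 : ‖l•b‖^2 = l^2*‖b‖^2 := by rw [norm_smul]; simp [Real.norm_eq_abs, mul_pow, sq_abs]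
  have e5 : ‖a-b‖^2 = ‖a‖^2 - 2*⟪a,b⟫ + ‖b‖^2 := norm_sub_sq_real _ _
  rw [e1, e2, e3, e4, e5]; ring


private lemma drA_exists_real (a : EReal) (h1 : a ≠ ⊤) (h2 : a ≠ ⊥) : ∃ r : ℝ, a = r := by
  lift a to ℝ using ⟨h1, h2⟩; exact ⟨a, rfl⟩

section Prox
variable {H : Type*} [NormedAddCommGroup H] [InnerProductSpace ℝ H]
variable (Φ : H → EReal) (hΦ_bot : ∀ z, Φ z ≠ ⊥)
variable (γ : ℝ) (hγ : 0 < γ) (proxΦ : H → H)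
variable (hproxΦ : ∀ x z : H, (γ : EReal) * Φ (proxΦ x) + ((‖x - proxΦ x‖ ^ 2 / 2 : ℝ) : EReal)
        ≤ (γ : EReal) * Φ z + ((‖x - z‖ ^ 2 / 2 : ℝ) : EReal))

include hΦ_bot hγ hproxΦ

private lemma drA_fin (zΦ : H) (hzΦ : Φ zΦ ≠ ⊤) : ∀ u, Φ (proxΦ u) ≠ ⊤ := by
  intro u hTop
  have h := hproxΦ u zΦ
  obtain ⟨cz, hcz⟩ := drA_exists_real (Φ zΦ) hzΦ (hΦ_bot zΦ)
  rw [hTop, hcz, EReal.coe_mul_top_of_pos hγ, EReal.top_add_coe] at h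
  have : ((γ * cz + ‖u - zΦ‖^2/2 : ℝ) : EReal) = (γ:EReal)*(cz:EReal) + ((‖u - zΦ‖^2/2:ℝ):EReal) := by
    push_cast; ring
  rw [← this] at h
  exact EReal.coe_ne_top _ (top_le_iff.mp h)

private lemma drA_sub
    (hΦ_convex : ∀ x y : H, ∀ a b : ℝ, 0 ≤ a → 0 ≤ b → a + b = 1 →
      Φ (a • x + b • y) ≤ (a : EReal) * Φ x + (b : EReal) * Φ y)
    (hfin : ∀ u, Φ (proxΦ u) ≠ ⊤) :
    ∀ u z : H, Φ (proxΦ u) + ((⟪γ⁻¹ • (u - proxΦ u), z - proxΦ u⟫ : ℝ) : EReal) ≤ Φ z := by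
  intro u z
  set p := proxΦ u with hp
  obtain ⟨cp, hcp⟩ := drA_exists_real (Φ p) (hfin u) (hΦ_bot p)
  by_cases hz : Φ z = ⊤
  · rw [hz, hcp]
    exact le_top
  obtain ⟨cz, hcz⟩ := drA_exists_real (Φ z) hz (hΦ_bot z)
  rw [hcp, hcz]
  have hcast : ((cp:EReal) + ((⟪γ⁻¹ • (u - p), z - p⟫:ℝ):EReal))
      = ((cp + ⟪γ⁻¹ • (u - p), z - p⟫ : ℝ) : EReal) := by norm_cast
  rw [hcast, EReal.coe_le_coe_iff]
  have key : ∀ t : ℝ, 0 < t → t ≤ 1 →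
      (⟪u - p, z - p⟫:ℝ) ≤ γ*(cz - cp) + t*(‖z - p‖^2/2) := by
    intro t ht0 ht1
    have hconv := hΦ_convex z p t (1-t) (le_of_lt ht0) (by linarith) (by ring)
    have hmin := hproxΦ u (t • z + (1-t) • p)
    have hΦzt : Φ (t • z + (1-t) • p) ≤ ((t*cz + (1-t)*cp : ℝ) : EReal) := by
      calc Φ (t • z + (1-t) • p) ≤ (t:EReal)*Φ z + ((1-t:ℝ):EReal)*Φ p := hconv
      _ = ((t*cz + (1-t)*cp : ℝ) : EReal) := by rw [hcz, hcp]; norm_cast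
    have h2 : (γ:EReal) * Φ (t • z + (1-t) • p) ≤ ((γ*(t*cz + (1-t)*cp) : ℝ) : EReal) := by
      calc (γ:EReal) * Φ (t • z + (1-t) • p)
          ≤ (γ:EReal) * ((t*cz + (1-t)*cp : ℝ) : EReal) :=
            mul_le_mul_of_nonneg_left hΦzt (by exact_mod_cast hγ.le)
      _ = _ := by norm_cast
    have h3 := le_trans hmin (add_le_add_left h2 _)
    rw [hcp] at h3
    have h4 : ((γ*cp + ‖u - p‖^2/2 : ℝ):EReal)
        ≤ ((γ*(t*cz+(1-t)*cp) + ‖u - (t•z+(1-t)•p)‖^2/2 : ℝ):EReal) := by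
      have e1 : ((γ*cp + ‖u - p‖^2/2 : ℝ):EReal)
          = (γ:EReal)*(cp:EReal) + ((‖u - p‖^2/2:ℝ):EReal) := by push_cast; ring
      have e2 : ((γ*(t*cz+(1-t)*cp) + ‖u - (t•z+(1-t)•p)‖^2/2 : ℝ):EReal)
          = ((γ*(t*cz+(1-t)*cp):ℝ):EReal) + ((‖u - (t•z+(1-t)•p)‖^2/2:ℝ):EReal) := by push_cast; ring
      rw [e1, e2]
      exact h3
    rw [EReal.coe_le_coe_iff] at h4
    have hzt : u - (t • z + (1-t) • p) = (u - p) - t • (z - p) := by module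
    have hexp : ‖(u - p) - t • (z - p)‖^2
        = ‖u-p‖^2 - 2*(t*⟪u-p, z-p⟫) + t^2*‖z-p‖^2 := by
      rw [norm_sub_sq_real, real_inner_smul_right, norm_smul]
      simp [Real.norm_eq_abs, mul_pow, sq_abs]
    rw [hzt, hexp] at h4
    have h5 : t * (⟪u-p,z-p⟫:ℝ) ≤ t * (γ*(cz-cp) + t*(‖z-p‖^2/2)) := by nlinarith [h4]
    exact (mul_le_mul_iff_right₀ ht0).mp h5
  have hlim : Tendsto (fun n : ℕ => γ*(cz-cp) + (1/(n+1))*(‖z-p‖^2/2)) atTop (𝓝 (γ*(cz-cp))) := by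
    have h0 : Tendsto (fun n : ℕ => (1:ℝ)/(n+1)) atTop (𝓝 0) :=
      tendsto_one_div_add_atTop_nhds_zero_nat
    have := (h0.mul_const (‖z-p‖^2/2)).const_add (γ*(cz-cp))
    simpa using this
  have hle : (⟪u-p, z-p⟫:ℝ) ≤ γ*(cz-cp) := by
    refine ge_of_tendsto hlim (Eventually.of_forall fun n => key (1/(n+1)) (by positivity) ?_)
    rw [div_le_one (by positivity)]
    have : (0:ℝ) ≤ n := Nat.cast_nonneg n
    linarith
  have hi : (⟪γ⁻¹ • (u - p), z - p⟫:ℝ) = γ⁻¹ * ⟪u - p, z - p⟫ := real_inner_smul_left _ _ _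
  rw [hi]
  have h6 : γ⁻¹ * (⟪u-p,z-p⟫:ℝ) ≤ γ⁻¹ * (γ*(cz-cp)) :=
    mul_le_mul_of_nonneg_left hle (by positivity)
  rw [inv_mul_cancel_left₀ hγ.ne'] at h6
  linarith

private lemma drA_proxeq (hfin : ∀ u, Φ (proxΦ u) ≠ ⊤) :
    ∀ u p : H, Φ p ≠ ⊤ →
      (∀ z, Φ p + ((⟪γ⁻¹ • (u - p), z - p⟫ : ℝ) : EReal) ≤ Φ z) → proxΦ u = p := by
  intro u p hpt hsub
  obtain ⟨cp, hcp⟩ := drA_exists_real (Φ p) hpt (hΦ_bot p)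
  set q := proxΦ u with hq
  obtain ⟨cq, hcq⟩ := drA_exists_real (Φ q) (hfin u) (hΦ_bot q)
  have h1 := hproxΦ u p
  rw [hcp, hcq] at h1
  have h1' : γ*cq + ‖u - q‖^2/2 ≤ γ*cp + ‖u - p‖^2/2 := by exact_mod_cast h1
  have h2 := hsub q
  rw [hcp, hcq] at h2
  have h2' : cp + (⟪γ⁻¹ • (u - p), q - p⟫:ℝ) ≤ cq := by exact_mod_cast h2
  rw [real_inner_smul_left] at h2'
  have h3 : γ*cp + (⟪u - p, q - p⟫:ℝ) ≤ γ*cq := by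
    have h := mul_le_mul_of_nonneg_left h2' hγ.le
    rw [mul_add, ← mul_assoc, mul_inv_cancel₀ hγ.ne', one_mul] at h
    linarith
  have hexp : ‖u - q‖^2 = ‖u - p‖^2 - 2*⟪u-p, q-p⟫ + ‖q-p‖^2 := by
    have e : u - q = (u-p) - (q-p) := by module
    rw [e, norm_sub_sq_real]
  have hqp : ‖q - p‖^2 ≤ 0 := by linarith
  have h0 : ‖q-p‖ = 0 := by nlinarith [norm_nonneg (q - p)]
  exact sub_eq_zero.mp (norm_eq_zero.mp h0)

private lemma drA_subR (hfin : ∀ u, Φ (proxΦ u) ≠ ⊤)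
    (hsub : ∀ u z : H, Φ (proxΦ u) + ((⟪γ⁻¹ • (u - proxΦ u), z - proxΦ u⟫ : ℝ) : EReal) ≤ Φ z) :
    ∀ u z : H, Φ z ≠ ⊤ →
      (Φ (proxΦ u)).toReal + γ⁻¹ * ⟪u - proxΦ u, z - proxΦ u⟫ ≤ (Φ z).toReal := by
  intro u z hz
  have h := hsub u z
  obtain ⟨cp, hcp⟩ := drA_exists_real (Φ (proxΦ u)) (hfin u) (hΦ_bot _)
  obtain ⟨cz, hcz⟩ := drA_exists_real (Φ z) hz (hΦ_bot z)
  rw [hcp, hcz] at h ⊢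
  rw [real_inner_smul_left] at h
  simp only [EReal.toReal_coe]
  exact_mod_cast h

private lemma drA_mono (hfin : ∀ u, Φ (proxΦ u) ≠ ⊤)
    (hsub : ∀ u z : H, Φ (proxΦ u) + ((⟪γ⁻¹ • (u - proxΦ u), z - proxΦ u⟫ : ℝ) : EReal) ≤ Φ z) :
    ∀ u w : H, (⟪(u - proxΦ u) - (w - proxΦ w), proxΦ w - proxΦ u⟫ : ℝ) ≤ 0 := by
  intro u w
  have h1 := drA_subR Φ hΦ_bot γ hγ proxΦ hproxΦ hfin hsub u (proxΦ w) (hfin w)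
  have h2 := drA_subR Φ hΦ_bot γ hγ proxΦ hproxΦ hfin hsub w (proxΦ u) (hfin u)
  rw [inner_sub_left]
  have e : (⟪w - proxΦ w, proxΦ w - proxΦ u⟫:ℝ) = -⟪w - proxΦ w, proxΦ u - proxΦ w⟫ := by
    rw [← inner_neg_right]
    congr 1
    abel
  rw [e]
  have hs : γ⁻¹ * ((⟪u - proxΦ u, proxΦ w - proxΦ u⟫:ℝ) + ⟪w - proxΦ w, proxΦ u - proxΦ w⟫) ≤ 0 := by
    rw [mul_add]; linarith
  have h := mul_le_mul_of_nonneg_left hs hγ.le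
  rw [← mul_assoc, mul_inv_cancel₀ hγ.ne', one_mul, mul_zero] at h
  linarith

end Prox


/-- Weak convergence of the Douglas–Rachford iteration: the iterates converge weakly
to some `x̂`, and `prox_{γΦ}(x̂)` minimizes `F = Ψ + Φ`. -/
theorem douglas_rachford_weak_convergence
    {H : Type*} [NormedAddCommGroup H] [InnerProductSpace ℝ H] [CompleteSpace H]
    (Ψ Φ : H → EReal)
    (hΨ_bot : ∀ z, Ψ z ≠ ⊥) (hΨ_top : ∃ z, Ψ z ≠ ⊤)
    (hΦ_bot : ∀ z, Φ z ≠ ⊥) (hΦ_top : ∃ z, Φ z ≠ ⊤)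
    (hΨ_lsc : LowerSemicontinuous Ψ) (hΦ_lsc : LowerSemicontinuous Φ)
    (hΨ_convex : ∀ x y : H, ∀ a b : ℝ, 0 ≤ a → 0 ≤ b → a + b = 1 →
      Ψ (a • x + b • y) ≤ (a : EReal) * Ψ x + (b : EReal) * Ψ y)
    (hΦ_convex : ∀ x y : H, ∀ a b : ℝ, 0 ≤ a → 0 ≤ b → a + b = 1 →
      Φ (a • x + b • y) ≤ (a : EReal) * Φ x + (b : EReal) * Φ y)
    -- qualification condition: `∂(Ψ+Φ) = ∂Ψ + ∂Φ`
    (hqual : ∀ p v : H,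
      (∀ z : H, (Ψ p + Φ p) + ((⟪v, z - p⟫ : ℝ) : EReal) ≤ Ψ z + Φ z)
        ↔ ∃ v₁ v₂ : H, v = v₁ + v₂ ∧
            (∀ z : H, Ψ p + ((⟪v₁, z - p⟫ : ℝ) : EReal) ≤ Ψ z) ∧
            (∀ z : H, Φ p + ((⟪v₂, z - p⟫ : ℝ) : EReal) ≤ Φ z))
    -- `F = Ψ + Φ` has a minimizer
    (hmin : ∃ xs : H, ∀ z : H, Ψ xs + Φ xs ≤ Ψ z + Φ z)
    (γ : ℝ) (hγ : 0 < γ)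
    -- the proximity operators of `γΨ` and `γΦ`
    (proxΨ proxΦ : H → H)
    (hproxΨ : ∀ x z : H, (γ : EReal) * Ψ (proxΨ x) + ((‖x - proxΨ x‖ ^ 2 / 2 : ℝ) : EReal)
        ≤ (γ : EReal) * Ψ z + ((‖x - z‖ ^ 2 / 2 : ℝ) : EReal))
    (hproxΦ : ∀ x z : H, (γ : EReal) * Φ (proxΦ x) + ((‖x - proxΦ x‖ ^ 2 / 2 : ℝ) : EReal)
        ≤ (γ : EReal) * Φ z + ((‖x - z‖ ^ 2 / 2 : ℝ) : EReal))
    (μ : ℕ → ℝ) (hμ : ∀ t, μ t ∈ Set.Ioo (0 : ℝ) 2)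
    (hμ_sum : ∑' t, ENNReal.ofReal (μ t * (2 - μ t)) = ⊤)
    (x : ℕ → H)
    (hrec : ∀ t : ℕ, x (t + 1) = (1 - μ t / 2) • x t + (μ t / 2) •
      ((2 : ℝ) • proxΨ ((2 : ℝ) • proxΦ (x t) - x t) - ((2 : ℝ) • proxΦ (x t) - x t))) :
    ∃ xhat : H,
      (∀ v : H, Filter.Tendsto (fun t => (⟪x t, v⟫ : ℝ)) Filter.atTop (nhds ⟪xhat, v⟫)) ∧
      (∀ z : H, Ψ (proxΦ xhat) + Φ (proxΦ xhat) ≤ Ψ z + Φ z) := by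
  classical
  obtain ⟨zΨ, hzΨ⟩ := hΨ_top
  obtain ⟨zΦ, hzΦ⟩ := hΦ_top
  have hfinΦ : ∀ u, Φ (proxΦ u) ≠ ⊤ := drA_fin Φ hΦ_bot γ hγ proxΦ hproxΦ zΦ hzΦ
  have hfinΨ : ∀ u, Ψ (proxΨ u) ≠ ⊤ := drA_fin Ψ hΨ_bot γ hγ proxΨ hproxΨ zΨ hzΨ
  have subΦ : ∀ u z : H,
      Φ (proxΦ u) + ((⟪γ⁻¹ • (u - proxΦ u), z - proxΦ u⟫ : ℝ) : EReal) ≤ Φ z :=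
    drA_sub Φ hΦ_bot γ hγ proxΦ hproxΦ hΦ_convex hfinΦ
  have subΨ : ∀ u z : H,
      Ψ (proxΨ u) + ((⟪γ⁻¹ • (u - proxΨ u), z - proxΨ u⟫ : ℝ) : EReal) ≤ Ψ z :=
    drA_sub Ψ hΨ_bot γ hγ proxΨ hproxΨ hΨ_convex hfinΨ
  have proxΦ_eq : ∀ u p : H, Φ p ≠ ⊤ →
      (∀ z, Φ p + ((⟪γ⁻¹ • (u - p), z - p⟫ : ℝ) : EReal) ≤ Φ z) → proxΦ u = p :=
    drA_proxeq Φ hΦ_bot γ hγ proxΦ hproxΦ hfinΦ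
  have proxΨ_eq : ∀ u p : H, Ψ p ≠ ⊤ →
      (∀ z, Ψ p + ((⟪γ⁻¹ • (u - p), z - p⟫ : ℝ) : EReal) ≤ Ψ z) → proxΨ u = p :=
    drA_proxeq Ψ hΨ_bot γ hγ proxΨ hproxΨ hfinΨ
  have monoΦ : ∀ u w : H, (⟪(u - proxΦ u) - (w - proxΦ w), proxΦ w - proxΦ u⟫ : ℝ) ≤ 0 :=
    drA_mono Φ hΦ_bot γ hγ proxΦ hproxΦ hfinΦ subΦ
  have monoΨ : ∀ u w : H, (⟪(u - proxΨ u) - (w - proxΨ w), proxΨ w - proxΨ u⟫ : ℝ) ≤ 0 :=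
    drA_mono Ψ hΨ_bot γ hγ proxΨ hproxΨ hfinΨ subΨ
  set T : H → H := fun u => (2:ℝ) • proxΨ ((2:ℝ) • proxΦ u - u) - ((2:ℝ) • proxΦ u - u)
    with hTdef
  have hrec' : ∀ t, x (t+1) = (1 - μ t / 2) • x t + (μ t / 2) • T (x t) := hrec
  -- reflections are nonexpansive
  have hrefl : ∀ (P : H → H), (∀ u w, (⟪(u - P u) - (w - P w), P w - P u⟫:ℝ) ≤ 0) →
      ∀ u w, ‖((2:ℝ) • P u - u) - ((2:ℝ) • P w - w)‖ ≤ ‖u - w‖ := by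
    intro P hP u w
    have hd : (⟪(u - P u) - (w - P w), ((u - P u) - (w - P w)) - (u - w)⟫:ℝ) ≤ 0 := by
      have e : ((u - P u) - (w - P w)) - (u - w) = P w - P u := by module
      rw [e]; exact hP u w
    have h := drA_refl (u - w) ((u - P u) - (w - P w)) hd
    have e2 : ((2:ℝ) • P u - u) - ((2:ℝ) • P w - w)
        = (u - w) - (2:ℝ) • ((u - P u) - (w - P w)) := by module
    rw [e2]; exact h
  have hTne : ∀ u w, ‖T u - T w‖ ≤ ‖u - w‖ := by
    intro u w
    have h1 : ‖((2:ℝ) • proxΦ u - u) - ((2:ℝ) • proxΦ w - w)‖ ≤ ‖u - w‖ := hrefl proxΦ monoΦ u w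
    have h2 := hrefl proxΨ monoΨ ((2:ℝ) • proxΦ u - u) ((2:ℝ) • proxΦ w - w)
    exact le_trans h2 h1
  -- fixed points minimize
  have hfix_min : ∀ y, T y = y → ∀ z, Ψ (proxΦ y) + Φ (proxΦ y) ≤ Ψ z + Φ z := by
    intro y hy
    set p := proxΦ y with hp
    have hq : proxΨ ((2:ℝ) • p - y) = p := by
      have h2 : (2:ℝ) • proxΨ ((2:ℝ) • p - y) = (2:ℝ) • p := by
        have hy' : (2:ℝ) • proxΨ ((2:ℝ) • p - y) - ((2:ℝ) • p - y) = y := hy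
        rw [sub_eq_iff_eq_add] at hy'
        rw [hy']; module
      exact smul_right_injective H two_ne_zero h2
    have hΨp : Ψ p ≠ ⊤ := by rw [← hq]; exact hfinΨ _
    have hv₁ : ∀ z, Ψ p + ((⟪-(γ⁻¹ • (y - p)), z - p⟫:ℝ):EReal) ≤ Ψ z := by
      intro z
      have h := subΨ ((2:ℝ) • p - y) z
      rw [hq] at h
      have e : γ⁻¹ • ((2:ℝ) • p - y - p) = -(γ⁻¹ • (y - p)) := by module
      rw [e] at h; exact h
    have hv₂ : ∀ z, Φ p + ((⟪γ⁻¹ • (y - p), z - p⟫:ℝ):EReal) ≤ Φ z := fun z => subΦ y z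
    have h0 := (hqual p 0).mpr ⟨-(γ⁻¹ • (y - p)), γ⁻¹ • (y - p), (neg_add_cancel _).symm, hv₁, hv₂⟩
    intro z
    have := h0 z
    simpa [inner_zero_left] using this
  -- fixed point exists
  obtain ⟨y₀, hy₀⟩ : ∃ y, T y = y := by
    obtain ⟨xs, hxs⟩ := hmin
    have h0 : ∀ z, (Ψ xs + Φ xs) + ((⟪(0:H), z - xs⟫:ℝ):EReal) ≤ Ψ z + Φ z := by
      intro z; simpa [inner_zero_left] using hxs z
    obtain ⟨v₁, v₂, hv, hv₁, hv₂⟩ := (hqual xs 0).mp h0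
    have hΦxs : Φ xs ≠ ⊤ := by
      intro h; have h2 := hv₂ zΦ; rw [h, EReal.top_add_coe] at h2
      exact hzΦ (top_le_iff.mp h2)
    have hΨxs : Ψ xs ≠ ⊤ := by
      intro h; have h2 := hv₁ zΨ; rw [h, EReal.top_add_coe] at h2
      exact hzΨ (top_le_iff.mp h2)
    have hv1 : v₁ = -v₂ := eq_neg_of_add_eq_zero_left hv.symm
    refine ⟨xs + γ • v₂, ?_⟩
    have hpΦ : proxΦ (xs + γ • v₂) = xs := by
      apply proxΦ_eq _ _ hΦxs
      intro z
      have e : γ⁻¹ • (xs + γ • v₂ - xs) = v₂ := by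
        rw [add_sub_cancel_left, smul_smul, inv_mul_cancel₀ hγ.ne', one_smul]
      rw [e]; exact hv₂ z
    have hpΨ : proxΨ ((2:ℝ) • xs - (xs + γ • v₂)) = xs := by
      apply proxΨ_eq _ _ hΨxs
      intro z
      have e : γ⁻¹ • ((2:ℝ) • xs - (xs + γ • v₂) - xs) = v₁ := by
        have e2 : (2:ℝ) • xs - (xs + γ • v₂) - xs = -(γ • v₂) := by module
        rw [e2, hv1, smul_neg, smul_smul, inv_mul_cancel₀ hγ.ne', one_smul]
      rw [e]; exact hv₁ z
    show (2:ℝ) • proxΨ ((2:ℝ) • proxΦ (xs + γ • v₂) - (xs + γ • v₂))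
        - ((2:ℝ) • proxΦ (xs + γ • v₂) - (xs + γ • v₂)) = xs + γ • v₂
    rw [hpΦ, hpΨ]
    module
  have hμ0 : ∀ t, 0 < μ t := fun t => (hμ t).1
  have hμ2 : ∀ t, μ t < 2 := fun t => (hμ t).2
  -- Fejér decrease
  have hdec : ∀ y, T y = y →
      ∀ t, ‖x (t+1) - y‖^2 + (μ t*(2-μ t)/4)*‖x t - T (x t)‖^2 ≤ ‖x t - y‖^2 := by
    intro y hy t
    have e : x (t+1) - y = (1 - μ t/2) • (x t - y) + (μ t/2) • (T (x t) - y) := by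
      rw [hrec' t]; module
    rw [e, drA_km]
    have hle : ‖T (x t) - y‖ ≤ ‖x t - y‖ := by
      calc ‖T (x t) - y‖ = ‖T (x t) - T y‖ := by rw [hy]
      _ ≤ ‖x t - y‖ := hTne _ _
    have e2 : (x t - y) - (T (x t) - y) = x t - T (x t) := by module
    rw [e2]
    have h1 : 0 < μ t / 2 := by linarith [hμ0 t]
    have h2 : μ t / 2 < 1 := by linarith [hμ2 t]
    nlinarith [pow_le_pow_left₀ (norm_nonneg (T (x t) - y)) hle 2, sq_nonneg ‖x t - T (x t)‖]
  have hdy_anti : ∀ y, T y = y → Antitone (fun t => ‖x t - y‖) := by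
    intro y hy
    apply antitone_nat_of_succ_le
    intro t
    have h := hdec y hy t
    have hnn : 0 ≤ (μ t*(2-μ t)/4)*‖x t - T (x t)‖^2 := by
      apply mul_nonneg
      · nlinarith [hμ0 t, hμ2 t]
      · positivity
    exact drA_sq_le (norm_nonneg _) (norm_nonneg _) (by linarith)
  have hdy_conv : ∀ y, T y = y → ∃ d, Tendsto (fun t => ‖x t - y‖) atTop (𝓝 d) := by
    intro y hy
    exact ⟨_, tendsto_atTop_ciInf (hdy_anti y hy)
      ⟨0, by rintro r ⟨t, rfl⟩; exact norm_nonneg _⟩⟩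
  have hM : ∀ t, ‖x t‖ ≤ ‖x 0 - y₀‖ + ‖y₀‖ := by
    intro t
    have h1 : ‖x t‖ ≤ ‖x t - y₀‖ + ‖y₀‖ := by
      have := norm_add_le (x t - y₀) y₀
      simpa using this
    have h2 : ‖x t - y₀‖ ≤ ‖x 0 - y₀‖ := hdy_anti y₀ hy₀ (Nat.zero_le t)
    linarith
  -- residual tends to zero
  have hr0 : Tendsto (fun t => ‖x t - T (x t)‖) atTop (𝓝 0) := by
    have hr_anti : Antitone (fun t => ‖x t - T (x t)‖) := by
      apply antitone_nat_of_succ_le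
      intro t
      have h1mu : (0:ℝ) ≤ 1 - μ t/2 := by linarith [hμ2 t]
      have hmu : (0:ℝ) ≤ μ t/2 := by linarith [hμ0 t]
      have e1 : x (t+1) - T (x t) = (1 - μ t/2) • (x t - T (x t)) := by rw [hrec' t]; module
      have e2 : x t - x (t+1) = (μ t/2) • (x t - T (x t)) := by rw [hrec' t]; module
      have esplit : x (t+1) - T (x (t+1)) = (x (t+1) - T (x t)) + (T (x t) - T (x (t+1))) := by
        module
      calc ‖x (t+1) - T (x (t+1))‖
          ≤ ‖x (t+1) - T (x t)‖ + ‖T (x t) - T (x (t+1))‖ := by rw [esplit]; exact norm_add_le _ _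
      _ ≤ (1 - μ t/2) * ‖x t - T (x t)‖ + ‖x t - x (t+1)‖ := by
          have ha : ‖x (t+1) - T (x t)‖ = (1 - μ t/2) * ‖x t - T (x t)‖ := by
            rw [e1, norm_smul, Real.norm_eq_abs, abs_of_nonneg h1mu]
          have hb : ‖T (x t) - T (x (t+1))‖ ≤ ‖x t - x (t+1)‖ := hTne _ _
          linarith [ha.le, ha.ge]
      _ = ‖x t - T (x t)‖ := by
          rw [e2, norm_smul, Real.norm_eq_abs, abs_of_nonneg hmu]; ring
    have hbdd : BddBelow (Set.range (fun t => ‖x t - T (x t)‖)) :=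
      ⟨0, by rintro r ⟨t, rfl⟩; exact norm_nonneg _⟩
    have hconv := tendsto_atTop_ciInf hr_anti hbdd
    set ρ := ⨅ t, ‖x t - T (x t)‖ with hρ
    have hρ0 : 0 ≤ ρ := le_ciInf (fun t => norm_nonneg _)
    rcases eq_or_lt_of_le hρ0 with h | h
    · rw [← h] at hconv; exact hconv
    exfalso
    have hlb : ∀ t, ρ ≤ ‖x t - T (x t)‖ := fun t => ciInf_le hbdd t
    have hsum : ∀ n, ∑ t ∈ Finset.range n, (μ t*(2-μ t)/4)*‖x t - T (x t)‖^2
        + ‖x n - y₀‖^2 ≤ ‖x 0 - y₀‖^2 := by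
      intro n
      induction n with
      | zero => simp
      | succ n ih =>
        rw [Finset.sum_range_succ]
        have hd := hdec y₀ hy₀ n
        linarith
    have hterm : ∀ t, (μ t*(2-μ t))*ρ^2/4 ≤ (μ t*(2-μ t)/4)*‖x t - T (x t)‖^2 := by
      intro t
      have hl := hlb t
      have h2 : 0 ≤ μ t*(2-μ t) := by nlinarith [hμ0 t, hμ2 t]
      have h3 := mul_le_mul_of_nonneg_left (pow_le_pow_left₀ hρ0 hl 2) h2
      linarith
    have hC : ∀ n, ∑ t ∈ Finset.range n, μ t*(2-μ t) ≤ 4*‖x 0 - y₀‖^2/ρ^2 := by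
      intro n
      have h1 : ∑ t ∈ Finset.range n, (μ t*(2-μ t))*ρ^2/4 ≤ ‖x 0 - y₀‖^2 := by
        refine le_trans (Finset.sum_le_sum (fun t _ => hterm t)) ?_
        have := hsum n
        nlinarith [sq_nonneg ‖x n - y₀‖]
      have h2 : ∑ t ∈ Finset.range n, (μ t*(2-μ t))*ρ^2/4
          = (ρ^2/4) * ∑ t ∈ Finset.range n, μ t*(2-μ t) := by
        rw [Finset.mul_sum]
        exact Finset.sum_congr rfl (fun t _ => by ring)
      rw [h2] at h1
      have hρ2 : (0:ℝ) < ρ^2 := by positivity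
      rw [le_div_iff₀ hρ2]
      nlinarith [h1]
    have hfin : (∑' t, ENNReal.ofReal (μ t * (2 - μ t)))
        ≤ ENNReal.ofReal (4*‖x 0 - y₀‖^2/ρ^2) := by
      rw [ENNReal.tsum_eq_iSup_sum]
      apply iSup_le
      intro s
      obtain ⟨n, hn⟩ := s.exists_nat_subset_range
      calc ∑ t ∈ s, ENNReal.ofReal (μ t*(2-μ t))
          ≤ ∑ t ∈ Finset.range n, ENNReal.ofReal (μ t*(2-μ t)) :=
            Finset.sum_le_sum_of_subset hn
      _ = ENNReal.ofReal (∑ t ∈ Finset.range n, μ t*(2-μ t)) :=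
            (ENNReal.ofReal_sum_of_nonneg (fun t _ => by nlinarith [hμ0 t, hμ2 t])).symm
      _ ≤ _ := ENNReal.ofReal_le_ofReal (hC n)
    rw [hμ_sum] at hfin
    exact ENNReal.ofReal_ne_top (top_le_iff.mp hfin)
  -- demiclosedness
  have hdemi : ∀ (U : Ultrafilter ℕ), ↑U ≤ (atTop : Filter ℕ) → ∀ w : H,
      (∀ v, Tendsto (fun t => (⟪x t, v⟫:ℝ)) U (𝓝 ⟪w, v⟫)) → T w = w := by
    intro U hU w hw
    have hMw : ∀ t, |‖x t - w‖| ≤ (‖x 0 - y₀‖ + ‖y₀‖) + ‖w‖ := by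
      intro t
      rw [abs_of_nonneg (norm_nonneg _)]
      calc ‖x t - w‖ ≤ ‖x t‖ + ‖w‖ := norm_sub_le _ _
      _ ≤ _ := by linarith [hM t]
    obtain ⟨α, hα⟩ := drA_ultra_lim (fun t => ‖x t - w‖) _ hMw U
    have hrU : Tendsto (fun t => ‖x t - T (x t)‖) U (𝓝 0) := hr0.mono_left hU
    have hkey : ∀ t, ‖x t - w‖^2 + 2*⟪x t - w, w - T w⟫ + ‖w - T w‖^2
        ≤ (‖x t - T (x t)‖ + ‖x t - w‖)^2 := by
      intro t
      have h1 : ‖x t - T w‖ ≤ ‖x t - T (x t)‖ + ‖x t - w‖ := by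
        have e : x t - T w = (x t - T (x t)) + (T (x t) - T w) := by module
        calc ‖x t - T w‖ ≤ ‖x t - T (x t)‖ + ‖T (x t) - T w‖ := by
              rw [e]; exact norm_add_le _ _
        _ ≤ _ := by linarith [hTne (x t) w]
      have h2 : ‖x t - T w‖^2 = ‖x t - w‖^2 + 2*⟪x t - w, w - T w⟫ + ‖w - T w‖^2 := by
        have e : x t - T w = (x t - w) + (w - T w) := by module
        rw [e, norm_add_sq_real]
      nlinarith [pow_le_pow_left₀ (norm_nonneg (x t - T w)) h1 2]
    have hL : Tendsto (fun t => (‖x t - T (x t)‖ + ‖x t - w‖)^2) U (𝓝 (α^2)) := by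
      have := (hrU.add hα).pow 2
      simpa using this
    have hi : Tendsto (fun t => (⟪x t - w, w - T w⟫:ℝ)) U (𝓝 0) := by
      have h3 : (fun t => (⟪x t - w, w - T w⟫:ℝ))
          = fun t => (⟪x t, w - T w⟫:ℝ) - ⟪w, w - T w⟫ := by
        funext t; exact inner_sub_left _ _ _
      rw [h3]
      have := (hw (w - T w)).sub_const (⟪w, w - T w⟫:ℝ)
      simpa using this
    have hR : Tendsto (fun t => ‖x t - w‖^2 + 2*(⟪x t - w, w - T w⟫:ℝ) + ‖w - T w‖^2) U
        (𝓝 (α^2 + 2*0 + ‖w - T w‖^2)) := by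
      exact ((hα.pow 2).add ((hi.const_mul 2))).add_const _
    have hle := le_of_tendsto_of_tendsto' hR hL hkey
    have h0 : ‖w - T w‖ = 0 := by nlinarith [norm_nonneg (w - T w)]
    exact (sub_eq_zero.mp (norm_eq_zero.mp h0)).symm
  -- cross terms converge
  have hcross : ∀ w w' : H, T w = w → T w' = w' →
      ∃ c, Tendsto (fun t => (⟪x t, w - w'⟫:ℝ)) atTop (𝓝 c) := by
    intro w w' hwf hw'f
    obtain ⟨dw, hdw⟩ := hdy_conv w hwf
    obtain ⟨dw', hdw'⟩ := hdy_conv w' hw'f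
    refine ⟨(dw'^2 - dw^2 + ‖w‖^2 - ‖w'‖^2)/2, ?_⟩
    have hid : (fun t => (⟪x t, w - w'⟫:ℝ))
        = fun t => (‖x t - w'‖^2 - ‖x t - w‖^2 + ‖w‖^2 - ‖w'‖^2)/2 := by
      funext t
      have e1 : ‖x t - w‖^2 = ‖x t‖^2 - 2*⟪x t, w⟫ + ‖w‖^2 := norm_sub_sq_real _ _
      have e2 : ‖x t - w'‖^2 = ‖x t‖^2 - 2*⟪x t, w'⟫ + ‖w'‖^2 := norm_sub_sq_real _ _
      have e3 : (⟪x t, w - w'⟫:ℝ) = ⟪x t, w⟫ - ⟪x t, w'⟫ := inner_sub_right _ _ _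
      rw [e3]; linarith
    rw [hid]
    exact ((((hdw'.pow 2).sub (hdw.pow 2)).add_const (‖w‖^2)).sub_const (‖w'‖^2)).div_const 2
  -- conclusion
  obtain ⟨w, hw⟩ := drA_weak_lim x _ hM (Ultrafilter.of atTop)
  have hwfix := hdemi _ (Ultrafilter.of_le _) w hw
  refine ⟨w, ?_, hfix_min w hwfix⟩
  intro v
  rw [Filter.tendsto_iff_ultrafilter]
  intro U hU
  obtain ⟨w', hw'⟩ := drA_weak_lim x _ hM U
  have hw'fix := hdemi U hU w' hw'
  obtain ⟨c, hc⟩ := hcross w w' hwfix hw'fix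
  have h1 : (⟪w, w - w'⟫:ℝ) = c :=
    tendsto_nhds_unique (hw (w - w')) (hc.mono_left (Ultrafilter.of_le _))
  have h2 : (⟪w', w - w'⟫:ℝ) = c := tendsto_nhds_unique (hw' (w - w')) (hc.mono_left hU)
  have hww' : w = w' := by
    have h3 : (⟪w - w', w - w'⟫:ℝ) = 0 := by rw [inner_sub_left]; linarith
    exact sub_eq_zero.mp (inner_self_eq_zero.mp h3)
  exact hww' ▸ hw' v
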